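/- If x̂ ∈ S is an efficient solution of (P) and both the extended Abadie data qualification (EADQ) and the Maeda objective qualification (MOQ) hold at x̂, then there exist ξ = (ξ_1, …, ξ_p) with ξ_i ∈ ∂f_i(x̂) for each i and λ in the unit simplex with λ_i > 0 for all i such that ϑ(x̂, ξ, λ) = 0. -/

import Mathlib

open Set Filter Topology
open scoped RealInnerProductSpace Pointwise

noncomputable section

namespace MOSIP

variable {n : ℕ} {T : Type*} {p : ℕ}

/-- The decision space `ℝ^n`. -/
abbrev Eucl (n : ℕ) := EuclideanSpace ℝ (Fin n)

/-- Subdifferential of a real-valued function. -/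
def subdiff (h : Eucl n → ℝ) (x : Eucl n) : Set (Eucl n) :=
  {ξ | ∀ y, h x + ⟪ξ, y - x⟫ ≤ h y}

/-- Subdifferential of an extended-real-valued function. -/
def subdiffE (h : Eucl n → EReal) (x : Eucl n) : Set (Eucl n) :=
  {ξ | ∀ y, h x + ((⟪ξ, y - x⟫ : ℝ) : EReal) ≤ h y}

/-- Convexity of an extended-real-valued function. -/
def ConvexE (h : Eucl n → EReal) : Prop :=
  ∀ x y : Eucl n, ∀ a b : ℝ, 0 ≤ a → 0 ≤ b → a + b = 1 →
    h (a • x + b • y) ≤ (a : EReal) * h x + (b : EReal) * h y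

/-- Proper (with values in `ℝ ∪ {+∞}`): never `−∞` and not identically `+∞`. -/
def ProperE (h : Eucl n → EReal) : Prop :=
  (∀ x, h x ≠ ⊥) ∧ (∃ x, h x ≠ ⊤)

/-- Feasible set `S` of the problem `(P)`. -/
def feasSet (g : T → Eucl n → EReal) : Set (Eucl n) := {x | ∀ t, g t x ≤ 0}

/-- Active indices `T(x)`. -/
def activeIx (g : T → Eucl n → EReal) (x : Eucl n) : Set T := {t | g t x = 0}

/-- `ε`-active indices `T_ε(x)`. -/
def activeIxEps (g : T → Eucl n → EReal) (x : Eucl n) (ε : ℝ) : Set T :=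
  {t | ((-ε : ℝ) : EReal) ≤ g t x}

/-- `F(xh) = ⋃ i, ∂f_i(xh)`. -/
def FSet (f : Fin p → Eucl n → ℝ) (x : Eucl n) : Set (Eucl n) := ⋃ i, subdiff (f i) x

/-- `G(xh) = ⋃_{t ∈ T(xh)} ∂g_t(xh)`. -/
def GSet (g : T → Eucl n → EReal) (x : Eucl n) : Set (Eucl n) :=
  ⋃ t ∈ activeIx g x, subdiffE (g t) x

/-- The smallest convex cone containing `M` and `0`: all finite nonnegative combinations. -/
def coneHull (M : Set (Eucl n)) : Set (Eucl n) :=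
  {x | ∃ (s : Finset (Eucl n)) (c : Eucl n → ℝ), ↑s ⊆ M ∧ (∀ v ∈ s, 0 ≤ c v) ∧
    x = ∑ v ∈ s, c v • v}

/-- Negative polar cone `M⁰`. -/
def negPolar (M : Set (Eucl n)) : Set (Eucl n) := {d | ∀ ξ ∈ M, ⟪ξ, d⟫ ≤ 0}

/-- Strictly negative polar cone `M⁻`. -/
def strictNegPolar (M : Set (Eucl n)) : Set (Eucl n) := {d | ∀ ξ ∈ M, ⟪ξ, d⟫ < 0}

/-- Contingent (Bouligand tangent) cone of `M` at `x`. -/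
def contingentCone (M : Set (Eucl n)) (x : Eucl n) : Set (Eucl n) :=
  {v | ∃ (τ : ℕ → ℝ) (w : ℕ → Eucl n), (∀ r, 0 < τ r) ∧ Tendsto τ atTop (𝓝 0) ∧
    Tendsto w atTop (𝓝 v) ∧ ∀ r, x + τ r • w r ∈ M}

/-- Normal cone `N(M, x) := C(M, x)⁰`. -/
def normalCone (M : Set (Eucl n)) (x : Eucl n) : Set (Eucl n) :=
  negPolar (contingentCone M x)

/-- Weak efficient solution. -/
def WeakEff (f : Fin p → Eucl n → ℝ) (S : Set (Eucl n)) (xh : Eucl n) : Prop :=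
  ¬ ∃ x ∈ S, ∀ i, f i x < f i xh

/-- Efficient solution. -/
def Eff (f : Fin p → Eucl n → ℝ) (S : Set (Eucl n)) (xh : Eucl n) : Prop :=
  ¬ ∃ x ∈ S, (∀ i, f i x ≤ f i xh) ∧ ∃ j, f j x < f j xh

/-- Isolated efficient solution with constant `ν`:
`max_i (f_i(x) − f_i(xh)) ≥ ν‖x − xh‖` on `S`. -/
def IsolatedEff (f : Fin p → Eucl n → ℝ) (S : Set (Eucl n)) (xh : Eucl n) (ν : ℝ) : Prop :=
  ∀ x ∈ S, ∃ i, ν * ‖x - xh‖ ≤ f i x - f i xh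

/-- `w ∈ Σ α_i ∂f_i(xh) + Σ_{t ∈ T*} β_t ∂g_t(xh)` with multipliers as described,
where `Nonneg`/`Pos` refers to the sign condition on the `α_i`. -/
def KKTPoint (f : Fin p → Eucl n → ℝ) (g : T → Eucl n → EReal) (xh : Eucl n)
    (w : Eucl n) : Prop :=
  ∃ (α : Fin p → ℝ) (Ts : Finset T) (β : T → ℝ) (ξ : Fin p → Eucl n) (ζ : T → Eucl n),
    (∀ i, 0 ≤ α i) ∧ ∑ i, α i = 1 ∧ (∀ t ∈ Ts, t ∈ activeIx g xh) ∧
    (∀ t ∈ Ts, 0 ≤ β t) ∧ (∀ i, ξ i ∈ subdiff (f i) xh) ∧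
    (∀ t ∈ Ts, ζ t ∈ subdiffE (g t) xh) ∧
    ∑ i, α i • ξ i + ∑ t ∈ Ts, β t • ζ t = w

/-- The weak KKT condition at `xh`. -/
def WeakKKT (f : Fin p → Eucl n → ℝ) (g : T → Eucl n → EReal) (xh : Eucl n) : Prop :=
  KKTPoint f g xh 0

/-- The strong KKT condition at `xh` (all objective multipliers positive). -/
def StrongKKT (f : Fin p → Eucl n → ℝ) (g : T → Eucl n → EReal) (xh : Eucl n) : Prop :=
  ∃ (α : Fin p → ℝ) (Ts : Finset T) (β : T → ℝ) (ξ : Fin p → Eucl n) (ζ : T → Eucl n),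
    (∀ i, 0 < α i) ∧ ∑ i, α i = 1 ∧ (∀ t ∈ Ts, t ∈ activeIx g xh) ∧
    (∀ t ∈ Ts, 0 ≤ β t) ∧ (∀ i, ξ i ∈ subdiff (f i) xh) ∧
    (∀ t ∈ Ts, ζ t ∈ subdiffE (g t) xh) ∧
    ∑ i, α i • ξ i + ∑ t ∈ Ts, β t • ζ t = 0

/-- The perturbed KKT condition at `xh` with constant `ν`. -/
def PerturbedKKT (f : Fin p → Eucl n → ℝ) (g : T → Eucl n → EReal) (xh : Eucl n)
    (ν : ℝ) : Prop :=
  ∀ w : Eucl n, ‖w‖ ≤ ν → KKTPoint f g xh w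

/-- The gap function `ϑ(x, ξ, λ) = sup_{y ∈ S} Σ_i λ_i ⟪ξ_i, x − y⟫`. -/
def gapFn (S : Set (Eucl n)) (x : Eucl n) (ξ : Fin p → Eucl n) (lam : Fin p → ℝ) : EReal :=
  ⨆ y ∈ S, ((∑ i, lam i * ⟪ξ i, x - y⟫ : ℝ) : EReal)

/-- The unit simplex of multipliers. -/
def simplex (lam : Fin p → ℝ) : Prop := (∀ i, 0 ≤ lam i) ∧ ∑ i, lam i = 1

/-- Supremum (marginal) function `ψ(x) = sup_t g_t(x)`. -/
def supFn (g : T → Eucl n → EReal) (x : Eucl n) : EReal := ⨆ t, g t x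

/-- Directional derivative of a convex extended-real-valued function,
`h'(x; d) = inf_{τ > 0} (h(x + τ d) − h(x))/τ` (the limit as `τ ↓ 0`). -/
def dirDeriv (h : Eucl n → EReal) (x d : Eucl n) : EReal :=
  ⨅ τ ∈ Ioi (0 : ℝ), (h (x + τ • d) - h x) * ((τ⁻¹ : ℝ) : EReal)

/-- Every constraint is (real-valued and) continuously differentiable around `xh`,
with gradient `gr t` at `xh`. -/
def SmoothConstraintsAt (g : T → Eucl n → EReal) (gr : T → Eucl n) (xh : Eucl n) : Prop :=
  ∀ t, ∃ (h : Eucl n → ℝ) (U : Set (Eucl n)), U ∈ 𝓝 xh ∧ (∀ y ∈ U, g t y = (h y : EReal)) ∧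
    ContDiffOn ℝ 1 h U ∧ gradient h xh = gr t

/-- Slater CQ. -/
def SCQ (g : T → Eucl n → EReal) : Prop := ∃ x₀ : Eucl n, ∀ t, g t x₀ < 0

/-- Mangasarian–Fromovitz CQ at `xh`. -/
def MFCQ (g : T → Eucl n → EReal) (xh : Eucl n) : Prop :=
  (GSet g xh).Nonempty ∧ (strictNegPolar (GSet g xh)).Nonempty

/-- Perturbed Mangasarian–Fromovitz CQ at `xh`. -/
def PMFCQ (g : T → Eucl n → EReal) (xh : Eucl n) : Prop :=
  ∃ xs : Eucl n,
    (⨅ ε ∈ Ioi (0 : ℝ), ⨆ ξ ∈ ⋃ t ∈ activeIxEps g xh ε, subdiffE (g t) xh,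
      ((⟪ξ, xs⟫ : ℝ) : EReal)) < 0

/-- Local Farkas–Minkowski CQ at `xh`. -/
def LFMCQ (g : T → Eucl n → EReal) (xh : Eucl n) : Prop :=
  normalCone (feasSet g) xh = coneHull (GSet g xh)

/-- Closed cone CQ at `xh`. -/
def CCCQ (g : T → Eucl n → EReal) (xh : Eucl n) : Prop :=
  IsClosed (coneHull (GSet g xh))

/-- Abadie CQ at `xh`. -/
def ACQ (g : T → Eucl n → EReal) (xh : Eucl n) : Prop :=
  (GSet g xh).Nonempty ∧ negPolar (GSet g xh) ⊆ contingentCone (feasSet g) xh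

/-- Kuhn–Tucker CQ at `xh`. -/
def KTCQ (g : T → Eucl n → EReal) (xh : Eucl n) : Prop :=
  {d | dirDeriv (supFn g) xh d ≤ 0} ⊆ contingentCone (feasSet g) xh

/-- Pshenichnyi–Levin–Valadier CQ at `xh`. -/
def PLVCQ (g : T → Eucl n → EReal) (xh : Eucl n) : Prop :=
  subdiffE (supFn g) xh ⊆ coneHull (GSet g xh)

/-- Weak Abadie DQ at `xh`. -/
def WADQ (f : Fin p → Eucl n → ℝ) (g : T → Eucl n → EReal) (xh : Eucl n) : Prop :=
  (GSet g xh).Nonempty ∧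
    strictNegPolar (FSet f xh) ∩ negPolar (GSet g xh) ⊆ contingentCone (feasSet g) xh

/-- The sublevel sets `Q^i(xh)`. -/
def QSet (f : Fin p → Eucl n → ℝ) (S : Set (Eucl n)) (xh : Eucl n) (i : Fin p) :
    Set (Eucl n) :=
  {x ∈ S | ∀ l, l ≠ i → f l x ≤ f l xh}

/-- Extended Abadie DQ at `xh`. -/
def EADQ (f : Fin p → Eucl n → ℝ) (g : T → Eucl n → EReal) (xh : Eucl n) : Prop :=
  (GSet g xh).Nonempty ∧
    negPolar (FSet f xh) ∩ negPolar (GSet g xh) ⊆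
      ⋂ i, contingentCone (QSet f (feasSet g) xh i) xh

/-- Maeda objective qualification at `xh`. -/
def MOQ (f : Fin p → Eucl n → ℝ) (xh : Eucl n) : Prop :=
  negPolar (FSet f xh) ⊆ {0} ∪ ⋃ i, strictNegPolar (subdiff (f i) xh)

variable {n p : ℕ} {T : Type*}

/-! ### Auxiliary convex-analysis lemmas -/

section Aux

variable {f : Eucl n → ℝ} {x : Eucl n}

/-- Difference quotient of `f` at `x` in direction `v`. -/
def dq (f : Eucl n → ℝ) (x v : Eucl n) (τ : ℝ) : ℝ := (f (x + τ • v) - f x) / τ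

/-- Directional derivative (as an infimum of difference quotients). -/
def phi (f : Eucl n → ℝ) (x v : Eucl n) : ℝ := sInf (dq f x v '' Ioi 0)

lemma dq_mono (hf : ConvexOn ℝ Set.univ f) {v : Eucl n} {σ τ : ℝ} (hσ : 0 < σ) (hστ : σ ≤ τ) :
    dq f x v σ ≤ dq f x v τ := by
  have hτ : 0 < τ := hσ.trans_le hστ
  set a : ℝ := σ / τ with ha_def
  have ha : 0 < a := div_pos hσ hτ
  have ha1 : a ≤ 1 := (div_le_one hτ).mpr hστ
  have hcomb : a • (x + τ • v) + (1 - a) • x = x + σ • v := by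
    have : a * τ = σ := by rw [ha_def, div_mul_cancel₀ _ hτ.ne']
    rw [smul_add, smul_smul, this]
    module
  have hconv := hf.2 (Set.mem_univ (x + τ • v)) (Set.mem_univ x) ha.le
    (sub_nonneg.mpr ha1) (by ring)
  rw [hcomb] at hconv
  simp only [smul_eq_mul] at hconv
  have hkey : f (x + σ • v) - f x ≤ a * (f (x + τ • v) - f x) := by linarith
  calc dq f x v σ ≤ (a * (f (x + τ • v) - f x)) / σ := (div_le_div_iff_of_pos_right hσ).mpr hkey
    _ = dq f x v τ := by rw [dq, ha_def]; field_simp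

lemma dq_lower_bound (hf : ConvexOn ℝ Set.univ f) {v : Eucl n} {τ : ℝ} (hτ : 0 < τ) :
    f x - f (x - v) ≤ dq f x v τ := by
  have hu : (0:ℝ) < 1 + τ := by linarith
  have hcomb : ((1+τ)⁻¹) • (x + τ • v) + (τ * (1+τ)⁻¹) • (x - v) = x := by
    rw [smul_add, smul_sub, smul_smul]
    match_scalars <;> field_simp <;> ring
  have hconv := hf.2 (Set.mem_univ (x + τ • v)) (Set.mem_univ (x - v))
    (by positivity : (0:ℝ) ≤ (1+τ)⁻¹) (by positivity : (0:ℝ) ≤ τ * (1+τ)⁻¹)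
    (by field_simp)
  rw [hcomb] at hconv
  simp only [smul_eq_mul] at hconv
  rw [dq, le_div_iff₀ hτ]
  have h1 : (1+τ) * f x ≤ f (x + τ • v) + τ * f (x - v) := by
    have := mul_le_mul_of_nonneg_left hconv hu.le
    calc (1+τ) * f x ≤ (1+τ) * ((1+τ)⁻¹ * f (x + τ • v) + τ * (1+τ)⁻¹ * f (x - v)) := this
      _ = f (x + τ • v) + τ * f (x - v) := by field_simp
  linarith

lemma bddBelow_dq (hf : ConvexOn ℝ Set.univ f) (v : Eucl n) :
    BddBelow (dq f x v '' Ioi 0) := by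
  refine ⟨f x - f (x - v), ?_⟩
  rintro r ⟨τ, hτ, rfl⟩
  exact dq_lower_bound hf hτ

lemma phi_le_dq (hf : ConvexOn ℝ Set.univ f) {v : Eucl n} {τ : ℝ} (hτ : 0 < τ) :
    phi f x v ≤ dq f x v τ :=
  csInf_le (bddBelow_dq hf v) ⟨τ, hτ, rfl⟩

lemma phi_nonneg (hf : ConvexOn ℝ Set.univ f) {v : Eucl n}
    (h : ∀ τ : ℝ, 0 < τ → f x ≤ f (x + τ • v)) : 0 ≤ phi f x v := by
  refine le_csInf ⟨dq f x v 1, ⟨1, by norm_num, rfl⟩⟩ ?_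
  rintro r ⟨τ, hτ, rfl⟩
  exact div_nonneg (sub_nonneg.mpr (h τ hτ)) (le_of_lt hτ)

lemma phi_zero (f : Eucl n → ℝ) (x : Eucl n) : phi f x 0 = 0 := by
  have : dq f x 0 '' Ioi 0 = {0} := by
    ext r
    simp only [Set.mem_image, Set.mem_singleton_iff, dq, smul_zero, add_zero, sub_self, zero_div]
    constructor
    · rintro ⟨τ, _, rfl⟩; rfl
    · rintro rfl; exact ⟨1, by norm_num, rfl⟩
  rw [phi, this, csInf_singleton]

lemma phi_add (hf : ConvexOn ℝ Set.univ f) (u v : Eucl n) :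
    phi f x (u + v) ≤ phi f x u + phi f x v := by
  refine le_of_forall_pos_le_add fun ε hε => ?_
  have hne_u : (dq f x u '' Ioi 0).Nonempty := ⟨dq f x u 1, 1, by norm_num, rfl⟩
  have hne_v : (dq f x v '' Ioi 0).Nonempty := ⟨dq f x v 1, 1, by norm_num, rfl⟩
  obtain ⟨r1, ⟨σ1, hσ1, rfl⟩, hr1⟩ :=
    exists_lt_of_csInf_lt hne_u (lt_add_of_pos_right (phi f x u) (half_pos hε))
  obtain ⟨r2, ⟨σ2, hσ2, rfl⟩, hr2⟩ :=
    exists_lt_of_csInf_lt hne_v (lt_add_of_pos_right (phi f x v) (half_pos hε))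
  set σ := min σ1 σ2 with hσ_def
  have hσ : 0 < σ := lt_min hσ1 hσ2
  have hmono1 : dq f x u σ ≤ dq f x u σ1 := dq_mono hf hσ (min_le_left _ _)
  have hmono2 : dq f x v σ ≤ dq f x v σ2 := dq_mono hf hσ (min_le_right _ _)
  have hkey : dq f x (u + v) (σ/2) ≤ dq f x u σ + dq f x v σ := by
    have hcomb : (1/2 : ℝ) • (x + σ • u) + (1/2 : ℝ) • (x + σ • v) = x + (σ/2) • (u + v) := by
      match_scalars <;> ring
    have hconv := hf.2 (Set.mem_univ (x + σ • u)) (Set.mem_univ (x + σ • v))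
      (by norm_num : (0:ℝ) ≤ 1/2) (by norm_num : (0:ℝ) ≤ 1/2) (by norm_num)
    rw [hcomb] at hconv
    simp only [smul_eq_mul] at hconv
    rw [dq, dq, dq, ← add_div, div_le_div_iff₀ (by positivity) hσ]
    nlinarith
  calc phi f x (u + v) ≤ dq f x (u + v) (σ/2) := phi_le_dq hf (by positivity)
    _ ≤ dq f x u σ + dq f x v σ := hkey
    _ ≤ dq f x u σ1 + dq f x v σ2 := add_le_add hmono1 hmono2
    _ ≤ phi f x u + phi f x v + ε := by linarith

lemma phi_smul (f : Eucl n → ℝ) (x : Eucl n) {c : ℝ} (hc : 0 < c) (v : Eucl n) :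
    phi f x (c • v) = c * phi f x v := by
  have himg : dq f x (c • v) '' Ioi 0 = (fun r => c * r) '' (dq f x v '' Ioi 0) := by
    ext r
    constructor
    · rintro ⟨τ, hτ, rfl⟩
      have hτ0 : τ ≠ 0 := (ne_of_gt (mem_Ioi.mp hτ))
      have hc0 : c ≠ 0 := hc.ne'
      refine ⟨dq f x v (c * τ), ⟨c * τ, mul_pos hc hτ, rfl⟩, ?_⟩
      rw [dq, dq, smul_smul, mul_comm τ c]
      field_simp
    · rintro ⟨s, ⟨τ, hτ, rfl⟩, rfl⟩
      have hτ0 : τ ≠ 0 := (ne_of_gt (mem_Ioi.mp hτ))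
      have hc0 : c ≠ 0 := hc.ne'
      refine ⟨τ / c, div_pos hτ hc, ?_⟩
      rw [dq, dq, smul_smul, div_mul_cancel₀ _ hc.ne']
      field_simp
  rw [phi, himg, phi]
  have : (fun r => c * r) '' (dq f x v '' Ioi 0) = c • (dq f x v '' Ioi 0) := by
    ext r; simp [Set.mem_smul_set, smul_eq_mul]
  rw [this, Real.sInf_smul_of_nonneg hc.le, smul_eq_mul]

lemma phi_exists_subgradient (hf : ConvexOn ℝ Set.univ f) (x : Eucl n) {d : Eucl n}
    (hd : d ≠ 0) : ∃ ξ ∈ subdiff f x, ⟪ξ, d⟫ = phi f x d := by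
  set pm := LinearPMap.mkSpanSingleton (K := ℝ) (L := ℝ) (σ := RingHom.id ℝ) d (phi f x d) hd with hpm
  have hdom : ∀ z : pm.domain, pm z ≤ phi f x z := by
    rintro ⟨z, hz⟩
    obtain ⟨c, rfl⟩ := Submodule.mem_span_singleton.mp hz
    have happ : pm ⟨c • d, hz⟩ = c • phi f x d := LinearPMap.mkSpanSingleton'_apply _ _ _ c _
    rw [happ, smul_eq_mul]
    rcases lt_trichotomy c 0 with hc | rfl | hc
    · have h1 : phi f x ((-c) • d) = (-c) * phi f x d := phi_smul f x (by linarith) d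
      have h2 : phi f x (c • d + (-c) • d) ≤ phi f x (c • d) + phi f x ((-c) • d) :=
        phi_add hf _ _
      have h3 : c • d + (-c) • d = 0 := by module
      rw [h3, phi_zero] at h2
      rw [h1] at h2
      linarith
    · simp [phi_zero]
    · rw [phi_smul f x hc d]
  obtain ⟨g, hg_ext, hg_le⟩ := exists_extension_of_le_sublinear pm (phi f x)
    (fun c hc v => phi_smul f x hc v) (fun u v => phi_add hf u v) hdom
  set ξ := (InnerProductSpace.toDual ℝ (Eucl n)).symm (LinearMap.toContinuousLinearMap g) with hξ
  have hrep : ∀ v, ⟪ξ, v⟫ = g v := fun v => InnerProductSpace.toDual_symm_apply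
  refine ⟨ξ, ?_, ?_⟩
  · intro y
    have h1 : ⟪ξ, y - x⟫ ≤ phi f x (y - x) := (hrep (y - x)) ▸ hg_le (y - x)
    have h2 : phi f x (y - x) ≤ dq f x (y - x) 1 := phi_le_dq hf one_pos
    have h3 : dq f x (y - x) 1 = f y - f x := by rw [dq]; simp
    linarith
  · have hmem : d ∈ pm.domain := Submodule.mem_span_singleton_self d
    have := hg_ext ⟨d, hmem⟩
    rw [hrep d, this]
    exact LinearPMap.mkSpanSingleton_apply ℝ ℝ hd (phi f x d)

lemma subdiff_nonempty (hn : 1 ≤ n) (hf : ConvexOn ℝ Set.univ f) (x : Eucl n) :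
    (subdiff f x).Nonempty := by
  set d : Eucl n := EuclideanSpace.single ⟨0, hn⟩ (1:ℝ) with hd_def
  have hd : d ≠ 0 := by
    intro h
    have : d ⟨0, hn⟩ = 0 := by rw [h]; rfl
    rw [hd_def, EuclideanSpace.single_apply] at this
    simp at this
  obtain ⟨ξ, hξ, -⟩ := phi_exists_subgradient hf x hd
  exact ⟨ξ, hξ⟩

lemma subdiff_convex (f : Eucl n → ℝ) (x : Eucl n) : Convex ℝ (subdiff f x) := by
  intro ξ hξ ζ hζ a b ha hb hab
  intro y
  have h1 := hξ y
  have h2 := hζ y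
  have hinner : ⟪a • ξ + b • ζ, y - x⟫ = a * ⟪ξ, y - x⟫ + b * ⟪ζ, y - x⟫ := by
    rw [inner_add_left, real_inner_smul_left, real_inner_smul_left]
  rw [hinner]
  have h4 : a * f y + b * f y = f y := by rw [← add_mul, hab, one_mul]
  have h5 : a * (f x + ⟪ξ, y - x⟫) + b * (f x + ⟪ζ, y - x⟫) =
      f x + (a * ⟪ξ, y - x⟫ + b * ⟪ζ, y - x⟫) := by linear_combination (f x) * hab
  have h6 := add_le_add (mul_le_mul_of_nonneg_left h1 ha) (mul_le_mul_of_nonneg_left h2 hb)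
  linarith

end Aux

/-- If `x̂ ∈ S` is an efficient solution of `(P)` and both EADQ and MOQ hold
at `x̂`, then there exist `ξ` with `ξ_i ∈ ∂f_i(x̂)` and `λ` in the unit simplex with all
`λ_i > 0` such that `ϑ(x̂, ξ, λ) = 0`. -/
theorem stmt10
    (hn : 1 ≤ n) (hp : 1 ≤ p)
    (f : Fin p → Eucl n → ℝ) (g : T → Eucl n → EReal)
    (hf : ∀ i, ConvexOn ℝ Set.univ (f i))
    (hgconv : ∀ t, ConvexE (g t))
    (hgproper : ∀ t, ProperE (g t))
    (hglsc : ∀ t, LowerSemicontinuous (g t))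
    (xh : Eucl n) (hxS : xh ∈ feasSet g)
    (heff : Eff f (feasSet g) xh)
    (headq : EADQ f g xh) (hmoq : MOQ f xh) :
    ∃ (ξ : Fin p → Eucl n) (lam : Fin p → ℝ),
      (∀ i, ξ i ∈ subdiff (f i) xh) ∧ simplex lam ∧ (∀ i, 0 < lam i) ∧
      gapFn (feasSet g) xh ξ lam = 0 := by
  classical
  haveI hi0 : Nonempty (Fin p) := ⟨⟨0, hp⟩⟩
  set A : Fin p → Set (Eucl n) := fun i => subdiff (f i) xh with hA
  have hAconv : ∀ i, Convex ℝ (A i) := fun i => subdiff_convex (f i) xh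
  have hAne : ∀ i, (A i).Nonempty := fun i => subdiff_nonempty hn (hf i) xh
  choose η hη using hAne
  set N : Set (Eucl n) := {v | ∀ y ∈ feasSet g, ⟪v, y - xh⟫ ≤ 0} with hNdef
  have hN0 : (0 : Eucl n) ∈ N := fun y _ => by simp
  have hNsmul : ∀ (r : ℝ), 0 ≤ r → ∀ ν ∈ N, r • ν ∈ N := fun r hr ν hν y hy => by
    rw [real_inner_smul_left]
    exact mul_nonpos_iff.mpr (Or.inl ⟨hr, hν y hy⟩)
  have hNconv : Convex ℝ N := by
    intro ν1 h1 ν2 h2 a b ha hb hab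
    intro y hy
    rw [inner_add_left, real_inner_smul_left, real_inner_smul_left]
    have k1 : a * ⟪ν1, y - xh⟫ ≤ 0 := mul_nonpos_iff.mpr (Or.inl ⟨ha, h1 y hy⟩)
    have k2 : b * ⟪ν2, y - xh⟫ ≤ 0 := mul_nonpos_iff.mpr (Or.inl ⟨hb, h2 y hy⟩)
    linarith
  have hGN : GSet g xh ⊆ N := by
    intro ζ hζ
    rw [GSet, Set.mem_iUnion₂] at hζ
    obtain ⟨t, ht, hζ⟩ := hζ
    intro y hy
    have h1 := hζ y
    have ht0 : g t xh = 0 := ht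
    rw [ht0, zero_add] at h1
    have h2 : g t y ≤ (0 : EReal) := hy t
    have h3 : ((⟪ζ, y - xh⟫ : ℝ) : EReal) ≤ ((0 : ℝ) : EReal) := by
      rw [EReal.coe_zero]; exact le_trans h1 h2
    exact EReal.coe_le_coe_iff.mp h3
  -- minimality of `f i` over `Q^i`
  have hmin : ∀ i, ∀ x ∈ QSet f (feasSet g) xh i, f i xh ≤ f i x := by
    intro i x hx
    by_contra hlt
    push_neg at hlt
    refine heff ⟨x, hx.1, fun l => ?_, ⟨i, hlt⟩⟩
    by_cases hl : l = i
    · subst hl; exact hlt.le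
    · exact hx.2 l hl
  -- key polar fact
  have key : ∀ d, d ∈ negPolar (FSet f xh) → d ∈ negPolar (GSet g xh) → d = 0 := by
    intro d hdF hdG
    by_contra hd0
    rcases hmoq hdF with h0 | hstr
    · exact hd0 h0
    rw [Set.mem_iUnion] at hstr
    obtain ⟨i, hstr⟩ := hstr
    have hC := headq.2 ⟨hdF, hdG⟩
    rw [Set.mem_iInter] at hC
    obtain ⟨τs, ws, hτpos, hτ0, hwlim, hmem⟩ := hC i
    have hgrow : ∀ τ : ℝ, 0 < τ → f i xh ≤ f i (xh + τ • d) := by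
      intro τ hτ
      have hev : ∀ᶠ r in atTop, f i xh ≤ f i (xh + τ • ws r) := by
        filter_upwards [hτ0.eventually_lt_const hτ] with r hr
        have h1 : f i xh ≤ f i (xh + τs r • ws r) := hmin i _ (hmem r)
        have h2 : 0 ≤ dq (f i) xh (ws r) (τs r) :=
          div_nonneg (by linarith) (hτpos r).le
        have h4 : 0 ≤ dq (f i) xh (ws r) τ :=
          le_trans h2 (dq_mono (hf i) (hτpos r) hr.le)
        rw [dq, le_div_iff₀ hτ, zero_mul, sub_nonneg] at h4
        exact h4
      have hcont : Continuous (f i) := by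
        rw [← continuousOn_univ]
        exact (hf i).continuousOn isOpen_univ
      have hlim : Tendsto (fun r => f i (xh + τ • ws r)) atTop (𝓝 (f i (xh + τ • d))) :=
        (hcont.tendsto _).comp (tendsto_const_nhds.add (hwlim.const_smul τ))
      exact ge_of_tendsto hlim hev
    have hphi : 0 ≤ phi (f i) xh d := phi_nonneg (hf i) hgrow
    obtain ⟨ξ, hξ, hξd⟩ := phi_exists_subgradient (hf i) xh hd0
    have hlt0 := hstr ξ hξ
    rw [hξd] at hlt0
    linarith
  -- the cone `D`
  set D : Set (Eucl n) := {x | ∃ (t : Fin p → ℝ) (b : Fin p → Eucl n) (ν : Eucl n),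
    (∀ i, 0 ≤ t i) ∧ (∀ i, b i ∈ A i) ∧ ν ∈ N ∧ x = ∑ i, t i • b i + ν} with hDdef
  have hDconv : Convex ℝ D := by
    rintro x ⟨t1, b1, ν1, ht1, hb1, hν1, rfl⟩ y ⟨t2, b2, ν2, ht2, hb2, hν2, rfl⟩ a c ha hc hac
    set tt : Fin p → ℝ := fun i => a * t1 i + c * t2 i with htt
    set bb : Fin p → Eucl n := fun i =>
      if h : tt i = 0 then b1 i
      else (a * t1 i / tt i) • b1 i + (c * t2 i / tt i) • b2 i with hbb
    have httn : ∀ i, 0 ≤ tt i := fun i =>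
      add_nonneg (mul_nonneg ha (ht1 i)) (mul_nonneg hc (ht2 i))
    have hterm : ∀ i, tt i • bb i = (a * t1 i) • b1 i + (c * t2 i) • b2 i := by
      intro i
      by_cases h : tt i = 0
      · have h' : a * t1 i + c * t2 i = 0 := h
        have k1 : a * t1 i = 0 ∧ c * t2 i = 0 := by
          constructor <;>
            nlinarith [mul_nonneg ha (ht1 i), mul_nonneg hc (ht2 i)]
        rw [hbb]
        simp only [dif_pos h]
        rw [h, k1.1, k1.2]
        simp
      · rw [hbb]
        simp only [dif_neg h]
        rw [smul_add, smul_smul, smul_smul, mul_comm (tt i), div_mul_cancel₀ _ h,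
          mul_comm (tt i), div_mul_cancel₀ _ h]
    refine ⟨tt, bb, a • ν1 + c • ν2, httn, ?_, hNconv hν1 hν2 ha hc hac, ?_⟩
    · intro i
      by_cases h : tt i = 0
      · rw [hbb]; simp only [dif_pos h]; exact hb1 i
      · rw [hbb]; simp only [dif_neg h]
        refine hAconv i (hb1 i) (hb2 i) (div_nonneg (mul_nonneg ha (ht1 i)) (httn i))
          (div_nonneg (mul_nonneg hc (ht2 i)) (httn i)) ?_
        rw [← add_div, div_self h]
    · rw [Finset.sum_congr rfl (fun i _ => hterm i), Finset.sum_add_distrib]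
      rw [smul_add, smul_add, Finset.smul_sum, Finset.smul_sum]
      simp only [smul_smul]
      abel
  have hND : N ⊆ D := fun ν hν =>
    ⟨fun _ => 0, η, ν, fun i => le_refl 0, hη, hν, by simp⟩
  have hD0 : (0 : Eucl n) ∈ D := hND hN0
  have hFD : FSet f xh ⊆ D := by
    intro ξ hξ
    rw [FSet, Set.mem_iUnion] at hξ
    obtain ⟨j, hξ⟩ := hξ
    refine ⟨fun i => if i = j then 1 else 0, fun i => if i = j then ξ else η i, 0,
      fun i => by by_cases h : i = j <;> simp [h], fun i => ?_, hN0, ?_⟩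
    · by_cases h : i = j
      · subst h; simp only [if_pos rfl]; exact hξ
      · simp only [if_neg h]; exact hη i
    · rw [add_zero, Finset.sum_eq_single j (fun i _ hij => by simp [hij])
        (fun h => absurd (Finset.mem_univ j) h)]
      simp
  have hDcone : ∀ r : ℝ, 0 < r → ∀ x ∈ D, r • x ∈ D := by
    rintro r hr x ⟨t, b, ν, ht, hb, hν, rfl⟩
    exact ⟨fun i => r * t i, b, r • ν, fun i => mul_nonneg hr.le (ht i), hb,
      hNsmul r hr.le ν hν, by rw [smul_add, Finset.smul_sum]; simp only [smul_smul]⟩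
  -- the closure of `D` is everything
  have hclD : closure D = Set.univ := by
    by_contra hne
    obtain ⟨z, hz⟩ : ∃ z, z ∉ closure D := by
      by_contra h; push_neg at h; exact hne (Set.eq_univ_of_forall h)
    obtain ⟨ℓ, u, hlt, hu⟩ :=
      geometric_hahn_banach_closed_point hDconv.closure isClosed_closure hz
    have hu0 : 0 < u := by have := hlt 0 (subset_closure hD0); simpa using this
    have hle : ∀ x ∈ D, ℓ x ≤ 0 := by
      intro x hx
      by_contra hpos
      push_neg at hpos
      have hr : 0 < (u + 1) / ℓ x := div_pos (by linarith) hpos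
      have := hlt _ (subset_closure (hDcone _ hr x hx))
      rw [map_smul, smul_eq_mul, div_mul_cancel₀ _ hpos.ne'] at this
      linarith
    set d := (InnerProductSpace.toDual ℝ (Eucl n)).symm ℓ with hd
    have hrep : ∀ v, ⟪d, v⟫ = ℓ v := fun v => InnerProductSpace.toDual_symm_apply
    have hdF : d ∈ negPolar (FSet f xh) := fun ξ hξ => by
      rw [real_inner_comm, hrep]; exact hle ξ (hFD hξ)
    have hdG : d ∈ negPolar (GSet g xh) := fun ζ hζ => by
      rw [real_inner_comm, hrep]; exact hle ζ (hND (hGN hζ))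
    have hd0 := key d hdF hdG
    have hz0 : ℓ z = 0 := by rw [← hrep, hd0, inner_zero_left]
    linarith
  -- `D` is everything
  have hDuniv : D = Set.univ := by
    have hint : (interior D).Nonempty := by
      rw [hDconv.interior_nonempty_iff_affineSpan_eq_top]
      have h1 : (affineSpan ℝ D : Set (Eucl n)) = Set.univ := by
        apply Set.eq_univ_of_univ_subset
        calc Set.univ = closure D := hclD.symm
          _ ⊆ closure (affineSpan ℝ D : Set (Eucl n)) :=
              closure_mono (subset_affineSpan ℝ D)
          _ = (affineSpan ℝ D : Set (Eucl n)) :=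
              (affineSpan ℝ D).closed_of_finiteDimensional.closure_eq
      exact SetLike.coe_injective (by rw [h1, AffineSubspace.top_coe])
    obtain ⟨x0, hx0⟩ := hint
    apply Set.eq_univ_of_forall
    intro z
    have hy : ((2 : ℝ) • z - x0) ∈ closure D := by rw [hclD]; trivial
    have hz : z = (1/2 : ℝ) • x0 + (1/2 : ℝ) • ((2 : ℝ) • z - x0) := by module
    have hmem := hDconv.combo_interior_closure_mem_interior hx0 hy
      (by norm_num : (0:ℝ) < 1/2) (by norm_num : (0:ℝ) ≤ 1/2) (by norm_num)
    rw [← hz] at hmem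
    exact interior_subset hmem
  -- assemble the multipliers
  have hmemD : (-∑ i, η i) ∈ D := by rw [hDuniv]; trivial
  obtain ⟨t, b, ν, ht, hb, hν, heq⟩ := hmemD
  set s : Fin p → ℝ := fun i => 1 + t i with hs_def
  have hs : ∀ i, 0 < s i := fun i => by
    have := ht i; simp only [hs_def]; linarith
  set ξ : Fin p → Eucl n := fun i => (s i)⁻¹ • (η i + t i • b i) with hξ_def
  have hξA : ∀ i, ξ i ∈ subdiff (f i) xh := by
    intro i
    have hco : (s i)⁻¹ + t i / s i = 1 := by
      rw [inv_eq_one_div, ← add_div,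
        show (1 : ℝ) + t i = s i from rfl, div_self (hs i).ne']
    have h := hAconv i (hη i) (hb i) (inv_nonneg.mpr (hs i).le)
      (div_nonneg (ht i) (hs i).le) hco
    have heqi : ξ i = (s i)⁻¹ • η i + (t i / s i) • b i := by
      simp only [hξ_def]
      rw [smul_add, smul_smul, inv_mul_eq_div]
    rw [heqi]
    exact h
  have hsum : ∑ i, s i • ξ i = -ν := by
    have h1 : ∀ i, s i • ξ i = η i + t i • b i := fun i => by
      simp only [hξ_def]
      rw [smul_smul, mul_inv_cancel₀ (hs i).ne', one_smul]
    rw [Finset.sum_congr rfl (fun i _ => h1 i), Finset.sum_add_distrib]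
    have h2 : ∑ i, t i • b i = -∑ i, η i - ν := eq_sub_of_add_eq heq.symm
    rw [h2]; abel
  set σ : ℝ := ∑ i, s i with hσ_def
  have hσ : 0 < σ := Finset.sum_pos (fun i _ => hs i) Finset.univ_nonempty
  set lam : Fin p → ℝ := fun i => s i / σ with hlam_def
  have hlampos : ∀ i, 0 < lam i := fun i => div_pos (hs i) hσ
  have hlamsum : ∑ i, lam i = 1 := by
    simp only [hlam_def]
    rw [← Finset.sum_div, ← hσ_def, div_self hσ.ne']
  have hw : ∑ i, lam i • ξ i = (-σ⁻¹) • ν := by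
    have h3 : ∀ i, lam i • ξ i = σ⁻¹ • (s i • ξ i) := fun i => by
      have hls : lam i = σ⁻¹ * s i := by
        rw [mul_comm σ⁻¹ (s i), ← div_eq_mul_inv]
      rw [hls, ← smul_smul]
    rw [Finset.sum_congr rfl (fun i _ => h3 i), ← Finset.smul_sum, hsum,
      smul_neg, neg_smul]
  refine ⟨ξ, lam, hξA, ⟨fun i => (hlampos i).le, hlamsum⟩, hlampos, ?_⟩
  have hval : ∀ y, (∑ i, lam i * ⟪ξ i, xh - y⟫) = σ⁻¹ * ⟪ν, y - xh⟫ := by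
    intro y
    have h1 : (∑ i, lam i * ⟪ξ i, xh - y⟫) = ⟪∑ i, lam i • ξ i, xh - y⟫ := by
      rw [sum_inner]
      exact Finset.sum_congr rfl fun i _ => (real_inner_smul_left _ _ _).symm
    rw [h1, hw, real_inner_smul_left, show xh - y = -(y - xh) by abel,
      inner_neg_right]
    ring
  rw [gapFn]
  apply le_antisymm
  · refine iSup₂_le fun y hy => ?_
    rw [hval y, ← EReal.coe_zero, EReal.coe_le_coe_iff]
    exact mul_nonpos_iff.mpr (Or.inl ⟨(inv_nonneg.mpr hσ.le), hν y hy⟩)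
  · have h0 : ((∑ i, lam i * ⟪ξ i, xh - xh⟫ : ℝ) : EReal) = (0 : EReal) := by
      rw [sub_self]
      simp
    calc (0 : EReal) = _ := h0.symm
      _ ≤ ⨆ y ∈ feasSet g, ((∑ i, lam i * ⟪ξ i, xh - y⟫ : ℝ) : EReal) :=
          le_iSup₂ (f := fun y (_ : y ∈ feasSet g) =>
            ((∑ i, lam i * ⟪ξ i, xh - y⟫ : ℝ) : EReal)) xh hxS

end MOSIP
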